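/- Minimum distance of Steane's enlarged code: under the hypotheses above (C^⊥ ≤ C ≤ C', dim C' ≥ dim C + 2, M fixed-point-free), every nonzero element (u|v) of span(G) that lies outside C'^⊥ ⊕ C'^⊥ satisfies w([u,v]) ≥ min{ d, d'' }, where d = w(C \ C'^⊥) and d'' = min{ w([u,v]) : u,v ∈ C' \ C'^⊥, v ≠ λu ∀λ ∈ F_q }. Consequently the enlarged symplectic code has minimum distance at least min{ d, ⌈(q+1)/q · d'⌉ } where d' = w(C' \ C'^⊥). -/

import Mathlib

def dualCode {F : Type*} [Field F] {ι : Type*} [Fintype ι]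
    (C : Submodule F (ι → F)) : Submodule F (ι → F) where
  carrier := {y | ∀ x ∈ C, dotProduct x y = 0}
  add_mem' := by
    intro a b ha hb x hx
    simp [dotProduct_add, ha x hx, hb x hx]
  zero_mem' := by intro x hx; simp
  smul_mem' := by
    intro c a ha x hx
    simp [dotProduct_smul, ha x hx]

def sympDual {F : Type*} [Field F] {n : ℕ}
    (S : Submodule F ((Fin n → F) × (Fin n → F))) :
    Submodule F ((Fin n → F) × (Fin n → F)) where
  carrier := {y | ∀ x ∈ S,
    dotProduct x.1 y.2 - dotProduct x.2 y.1 = 0}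
  add_mem' := by
    intro a b ha hb x hx
    have h1 := ha x hx
    have h2 := hb x hx
    simp only [Prod.fst_add, Prod.snd_add, dotProduct_add] at *
    linear_combination h1 + h2
  zero_mem' := by intro x hx; simp
  smul_mem' := by
    intro c a ha x hx
    have h := ha x hx
    simp only [Prod.smul_fst, Prod.smul_snd, dotProduct_smul,
      smul_eq_mul] at *
    linear_combination c * h

section helpers

variable {F : Type*} [Field F] {N r s : ℕ}

lemma mem_dualCode {ι : Type*} [Fintype ι] {C : Submodule F (ι → F)} {y : ι → F} :
    y ∈ dualCode C ↔ ∀ x ∈ C, dotProduct x y = 0 := Iff.rfl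

lemma dualCode_antitone {ι : Type*} [Fintype ι] {C D : Submodule F (ι → F)} (h : C ≤ D) :
    dualCode D ≤ dualCode C := fun y hy x hx => hy x (h hx)

lemma combo_mem_span {ι : Type*} [Fintype ι] (W : ι → Fin N → F) (c : ι → F) :
    (∑ i, c i • W i) ∈ Submodule.span F (Set.range W) :=
  Submodule.sum_mem _ fun i _ => Submodule.smul_mem _ _ (Submodule.subset_span ⟨i, rfl⟩)

lemma single_combo {ι : Type*} [Fintype ι] [DecidableEq ι] (W : ι → Fin N → F) (i : ι) :
    ∑ j, (Pi.single i (1 : F) : ι → F) j • W j = W i := by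
  simp [Pi.single_apply, ite_smul]

lemma spanU_le_spanUV (U : Fin r → Fin N → F) (V : Fin s → Fin N → F) :
    Submodule.span F (Set.range U) ≤ Submodule.span F (Set.range (Sum.elim U V)) := by
  apply Submodule.span_mono
  rintro _ ⟨i, rfl⟩; exact ⟨Sum.inl i, rfl⟩

lemma spanV_le_spanUV (U : Fin r → Fin N → F) (V : Fin s → Fin N → F) :
    Submodule.span F (Set.range V) ≤ Submodule.span F (Set.range (Sum.elim U V)) := by
  apply Submodule.span_mono
  rintro _ ⟨i, rfl⟩; exact ⟨Sum.inr i, rfl⟩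

lemma eq_coeffs (U : Fin r → Fin N → F) (V : Fin s → Fin N → F)
    (hW : LinearIndependent F (Sum.elim U V)) {c c' : Fin r → F} {x x' : Fin s → F}
    (h : (∑ i, c i • U i) + (∑ j, x j • V j) = (∑ i, c' i • U i) + (∑ j, x' j • V j)) :
    x = x' := by
  rw [linearIndependent_sum] at hW
  obtain ⟨hU, hV, hdisj⟩ := hW
  have hU' : (Sum.elim U V ∘ Sum.inl) = U := rfl
  have hV' : (Sum.elim U V ∘ Sum.inr) = V := rfl
  rw [hU', hV'] at hdisj
  have key : (∑ j, (x - x') j • V j) = (∑ i, (c' - c) i • U i) := by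
    have h2 : (∑ j, x j • V j) - (∑ j, x' j • V j)
        = (∑ i, c' i • U i) - (∑ i, c i • U i) := by
      rw [sub_eq_sub_iff_add_eq_add, add_comm]
      exact h
    simpa [Pi.sub_apply, sub_smul, Finset.sum_sub_distrib] using h2
  have hmemV : (∑ j, (x - x') j • V j) ∈ Submodule.span F (Set.range V) :=
    combo_mem_span V _
  have hmemU : (∑ j, (x - x') j • V j) ∈ Submodule.span F (Set.range U) := by
    rw [key]; exact combo_mem_span U _
  have h0 : (∑ j, (x - x') j • V j) = 0 :=
    Submodule.disjoint_def.mp hdisj _ hmemU hmemV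
  have := Fintype.linearIndependent_iff.mp hV (x - x') h0
  funext j
  have hj := this j
  simpa [sub_eq_zero] using hj

lemma notin_spanU (U : Fin r → Fin N → F) (V : Fin s → Fin N → F)
    (hW : LinearIndependent F (Sum.elim U V)) {c : Fin r → F} {x : Fin s → F}
    (hx : x ≠ 0) :
    (∑ i, c i • U i) + (∑ j, x j • V j) ∉ Submodule.span F (Set.range U) := by
  intro hmem
  obtain ⟨c', hc'⟩ := (Submodule.mem_span_range_iff_exists_fun F).mp hmem
  have : x = 0 := by
    apply eq_coeffs U V hW (c := c) (c' := c') (x' := 0)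
    simp [hc']
  exact hx this

end helpers

section rep

variable {F : Type*} [Field F] {N r s : ℕ}

lemma repS (U : Fin r → Fin N → F) (V : Fin s → Fin N → F) (M : Matrix (Fin s) (Fin s) F)
    {p : (Fin N → F) × (Fin N → F)}
    (hp : p ∈ Submodule.span F
      ((Set.range fun i => (U i, (0 : Fin N → F))) ∪
       (Set.range fun i => ((0 : Fin N → F), U i)) ∪
       (Set.range fun j => (V j, fun t => ∑ l, M j l * V l t)))) :
    ∃ (c c' : Fin r → F) (x : Fin s → F),
      p.1 = (∑ i, c i • U i) + (∑ j, x j • V j) ∧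
      p.2 = (∑ i, c' i • U i) + (∑ j, (Matrix.vecMul x M) j • V j) := by
  induction hp using Submodule.span_induction with
  | mem z hz =>
    rcases hz with (⟨i, rfl⟩ | ⟨i, rfl⟩) | ⟨j, rfl⟩
    · refine ⟨Pi.single i 1, 0, 0, ?_, ?_⟩ <;>
        simp [single_combo, Matrix.zero_vecMul]
    · refine ⟨0, Pi.single i 1, 0, ?_, ?_⟩ <;>
        simp [single_combo, Matrix.zero_vecMul]
    · refine ⟨0, 0, Pi.single j 1, ?_, ?_⟩
      · simp [single_combo]
      · have hvm : Matrix.vecMul (Pi.single j (1 : F)) M = M j := by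
          funext l
          simp [Matrix.vecMul, dotProduct, Pi.single_apply]
        simp only [hvm]
        funext t
        simp [Finset.sum_apply]
  | zero => exact ⟨0, 0, 0, by simp, by simp [Matrix.zero_vecMul]⟩
  | add a b _ _ iha ihb =>
    obtain ⟨c₁, c₁', x₁, h1, h2⟩ := iha
    obtain ⟨c₂, c₂', x₂, h3, h4⟩ := ihb
    refine ⟨c₁ + c₂, c₁' + c₂', x₁ + x₂, ?_, ?_⟩
    · simp only [Prod.fst_add, h1, h3, Pi.add_apply, add_smul, Finset.sum_add_distrib]
      abel
    · simp only [Prod.snd_add, h2, h4, Matrix.add_vecMul, Pi.add_apply, add_smul,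
        Finset.sum_add_distrib]
      abel
  | smul t a _ ih =>
    obtain ⟨c, c', x, h1, h2⟩ := ih
    refine ⟨t • c, t • c', t • x, ?_, ?_⟩
    · simp only [Prod.smul_fst, h1, Pi.smul_apply, smul_eq_mul, mul_smul, smul_add,
        Finset.smul_sum]
    · simp only [Prod.smul_snd, h2, Matrix.smul_vecMul, Pi.smul_apply, smul_eq_mul,
        mul_smul, smul_add, Finset.smul_sum]

end rep

section count

variable {F : Type*} [Field F] [Fintype F] [DecidableEq F] {N : ℕ}

lemma hammingNorm_eq_sum (z : Fin N → F) :
    hammingNorm z = ∑ i, if z i ≠ 0 then 1 else 0 :=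
  Finset.card_filter _ _

lemma counting (u v : Fin N → F) :
    hammingNorm u + ∑ lam : F, hammingNorm (v + lam • u)
      ≤ Fintype.card F
        * (Finset.univ.filter fun i : Fin N => u i ≠ 0 ∨ v i ≠ 0).card := by
  classical
  have hstep1 : hammingNorm u + ∑ lam : F, hammingNorm (v + lam • u)
      = ∑ i, ((if u i ≠ 0 then 1 else 0)
          + ∑ lam : F, if v i + lam * u i ≠ 0 then 1 else 0) := by
    rw [Finset.sum_add_distrib, ← hammingNorm_eq_sum]
    congr 1
    rw [Finset.sum_comm]
    refine Finset.sum_congr rfl fun lam _ => ?_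
    rw [hammingNorm_eq_sum]
    refine Finset.sum_congr rfl fun i _ => ?_
    simp [Pi.add_apply, Pi.smul_apply, smul_eq_mul]
  rw [hstep1]
  have hstep2 : ∀ i : Fin N,
      ((if u i ≠ 0 then 1 else 0)
        + ∑ lam : F, if v i + lam * u i ≠ 0 then 1 else 0)
      ≤ if u i ≠ 0 ∨ v i ≠ 0 then Fintype.card F else 0 := by
    intro i
    by_cases hu : u i ≠ 0
    · have hset : (Finset.univ.filter fun lam : F => ¬ (v i + lam * u i ≠ 0))
          = {-(v i) / u i} := by
        ext lam
        simp only [Finset.mem_filter, Finset.mem_univ, true_and, not_not,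
          Finset.mem_singleton]
        rw [eq_div_iff hu]
        constructor <;> intro h <;> linear_combination h
      have hcards := Finset.card_filter_add_card_filter_not
        (s := (Finset.univ : Finset F)) (p := fun lam : F => v i + lam * u i ≠ 0)
      rw [hset] at hcards
      simp only [Finset.card_singleton, Finset.card_univ] at hcards
      rw [Finset.card_filter] at hcards
      simp only [hu, ne_eq, not_false_eq_true, if_true, true_or]
      simp only [ne_eq] at hcards ⊢
      omega
    · push_neg at hu
      simp only [hu, mul_zero, add_zero, ne_eq, not_true_eq_false, if_false,
        zero_add, false_or]
      by_cases hv : v i ≠ 0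
      · simp [hv, Finset.card_univ]
      · push_neg at hv
        simp [hv]
  calc ∑ i, ((if u i ≠ 0 then 1 else 0)
        + ∑ lam : F, if v i + lam * u i ≠ 0 then 1 else 0)
      ≤ ∑ i, (if u i ≠ 0 ∨ v i ≠ 0 then Fintype.card F else 0) :=
        Finset.sum_le_sum fun i _ => hstep2 i
    _ = Fintype.card F
        * (Finset.univ.filter fun i : Fin N => u i ≠ 0 ∨ v i ≠ 0).card := by
        rw [← Finset.sum_filter, Finset.sum_const, smul_eq_mul, mul_comm]

end count

/-- minimum distance of Steane's enlarged code. -/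
theorem stmt16 {F : Type*} [Field F] [Fintype F] [DecidableEq F]
    {N r s : ℕ} (hs : 2 ≤ s)
    (U : Fin r → Fin N → F) (V : Fin s → Fin N → F)
    (hW : LinearIndependent F (Sum.elim U V))
    (C C' : Submodule F (Fin N → F))
    (hC : C = Submodule.span F (Set.range U))
    (hC' : C' = Submodule.span F (Set.range (Sum.elim U V)))
    (hCdual : dualCode C ≤ C)
    (M : Matrix (Fin s) (Fin s) F) (hMunit : IsUnit M.det)
    (hMev : ∀ (x : Fin s → F) (lam : F), x ≠ 0 → Matrix.vecMul x M ≠ lam • x)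
    (S : Submodule F ((Fin N → F) × (Fin N → F)))
    (hS : S = Submodule.span F
      ((Set.range fun i => (U i, (0 : Fin N → F))) ∪
       (Set.range fun i => ((0 : Fin N → F), U i)) ∪
       (Set.range fun j => (V j, fun t => ∑ l, M j l * V l t))))
    (d d' d'' : ℕ)
    (hd : d = sInf {m : ℕ | ∃ x ∈ C, x ∉ dualCode C' ∧ m = hammingNorm x})
    (hd' : d' = sInf {m : ℕ | ∃ x ∈ C', x ∉ dualCode C' ∧ m = hammingNorm x})
    (hd'' : d'' = sInf {m : ℕ | ∃ u v : Fin N → F,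
      u ∈ C' ∧ u ∉ dualCode C' ∧ v ∈ C' ∧ v ∉ dualCode C' ∧
      (∀ lam : F, v ≠ lam • u) ∧
      m = (Finset.univ.filter fun i : Fin N => u i ≠ 0 ∨ v i ≠ 0).card}) :
    (∀ u v : Fin N → F, (u, v) ∈ S → (u, v) ≠ 0 →
      ¬(u ∈ dualCode C' ∧ v ∈ dualCode C') →
      min d d'' ≤ (Finset.univ.filter fun i : Fin N => u i ≠ 0 ∨ v i ≠ 0).card) ∧
    (∀ u v : Fin N → F, (u, v) ∈ S → (u, v) ∉ sympDual S →
      min d (Nat.ceil (((Fintype.card F + 1) * d' : ℚ) / (Fintype.card F : ℚ)))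
        ≤ (Finset.univ.filter fun i : Fin N => u i ≠ 0 ∨ v i ≠ 0).card) := by
  classical
  set D := dualCode C' with hD
  -- basic containments
  have hCleC' : C ≤ C' := by
    rw [hC, hC']; exact spanU_le_spanUV U V
  have hDleC : D ≤ C := le_trans (dualCode_antitone hCleC') hCdual
  have hDleSpanU : D ≤ Submodule.span F (Set.range U) := by
    rw [← hC]; exact hDleC
  have hC'mem : ∀ (c : Fin r → F) (x : Fin s → F),
      (∑ i, c i • U i) + (∑ j, x j • V j) ∈ C' := by
    intro c x
    rw [hC']
    exact Submodule.add_mem _ (spanU_le_spanUV U V (combo_mem_span U c))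
      (spanV_le_spanUV U V (combo_mem_span V x))
  -- the core bound, proving both conclusions at once
  have core : ∀ u v : Fin N → F, (u, v) ∈ S →
      ¬(u ∈ D ∧ v ∈ D) →
      (min d d'' ≤ (Finset.univ.filter fun i : Fin N => u i ≠ 0 ∨ v i ≠ 0).card ∧
       min d (Nat.ceil (((Fintype.card F + 1) * d' : ℚ) / (Fintype.card F : ℚ)))
        ≤ (Finset.univ.filter fun i : Fin N => u i ≠ 0 ∨ v i ≠ 0).card) := by
    intro u v huvS hboth
    rw [hS] at huvS
    obtain ⟨c, c', x, hu, hv⟩ := repS U V M huvS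
    simp only at hu hv
    by_cases hx : x = 0
    · -- both u and v are in C
      subst hx
      have hu0 : u = ∑ i, c i • U i := by rw [hu]; simp
      have hv0 : v = ∑ i, c' i • U i := by rw [hv]; simp [Matrix.zero_vecMul]
      have huC : u ∈ C := by rw [hC, hu0]; exact combo_mem_span U c
      have hvC : v ∈ C := by rw [hC, hv0]; exact combo_mem_span U c'
      have hdle : d ≤ (Finset.univ.filter fun i : Fin N => u i ≠ 0 ∨ v i ≠ 0).card := by
        rcases not_and_or.mp hboth with h | h
        · calc d ≤ hammingNorm u := hd ▸ Nat.sInf_le ⟨u, huC, h, rfl⟩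
            _ ≤ _ := Finset.card_le_card
                (Finset.monotone_filter_right _ (fun i _ hi => Or.inl hi))
        · calc d ≤ hammingNorm v := hd ▸ Nat.sInf_le ⟨v, hvC, h, rfl⟩
            _ ≤ _ := Finset.card_le_card
                (Finset.monotone_filter_right _ (fun i _ hi => Or.inr hi))
      exact ⟨le_trans (min_le_left _ _) hdle, le_trans (min_le_left _ _) hdle⟩
    · -- x ≠ 0
      have hxM : Matrix.vecMul x M ≠ 0 := by simpa using hMev x 0 hx
      have huC' : u ∈ C' := by rw [hu]; exact hC'mem c x
      have hvC' : v ∈ C' := by rw [hv]; exact hC'mem c' _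
      have huD : u ∉ D := fun h => notin_spanU U V hW hx (hu ▸ hDleSpanU h)
      have hvD : v ∉ D := fun h => notin_spanU U V hW hxM (hv ▸ hDleSpanU h)
      -- v is not a multiple of u
      have hvlam : ∀ lam : F, v ≠ lam • u := by
        intro lam heq
        have hlu : lam • u = (∑ i, (lam • c) i • U i) + (∑ j, (lam • x) j • V j) := by
          rw [hu]
          simp only [smul_add, Finset.smul_sum, Pi.smul_apply, smul_eq_mul, mul_smul]
        exact hMev x lam hx (eq_coeffs U V hW (hv.symm.trans (heq.trans hlu)))
      -- each v + lam • u lies in C' \ D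
      have hzrep : ∀ lam : F, v + lam • u =
          (∑ i, (c' + lam • c) i • U i)
            + (∑ j, (Matrix.vecMul x M + lam • x) j • V j) := by
        intro lam
        rw [hu, hv]
        simp only [Pi.add_apply, Pi.smul_apply, smul_eq_mul, add_smul, mul_smul,
          Finset.sum_add_distrib, smul_add, Finset.smul_sum]
        abel
      have hzC' : ∀ lam : F, v + lam • u ∈ C' := by
        intro lam; rw [hzrep lam]; exact hC'mem _ _
      have hzD : ∀ lam : F, v + lam • u ∉ D := by
        intro lam h
        have hcoef : Matrix.vecMul x M + lam • x ≠ 0 := by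
          intro h0
          exact hMev x (-lam) hx
            (by rw [neg_smul]; exact eq_neg_of_add_eq_zero_left h0)
        exact notin_spanU U V hW hcoef ((hzrep lam) ▸ hDleSpanU h)
      -- d'' bound
      have hd''le : d'' ≤ (Finset.univ.filter fun i : Fin N => u i ≠ 0 ∨ v i ≠ 0).card :=
        hd'' ▸ Nat.sInf_le ⟨u, v, huC', huD, hvC', hvD, hvlam, rfl⟩
      -- d' counting bound
      have hd'u : d' ≤ hammingNorm u := hd' ▸ Nat.sInf_le ⟨u, huC', huD, rfl⟩
      have hd'z : ∀ lam : F, d' ≤ hammingNorm (v + lam • u) := fun lam =>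
        hd' ▸ Nat.sInf_le ⟨v + lam • u, hzC' lam, hzD lam, rfl⟩
      have hsumge : (Fintype.card F + 1) * d'
          ≤ hammingNorm u + ∑ lam : F, hammingNorm (v + lam • u) := by
        have h1 : Fintype.card F * d' ≤ ∑ lam : F, hammingNorm (v + lam • u) := by
          calc Fintype.card F * d' = ∑ _lam : F, d' := by
                rw [Finset.sum_const, Finset.card_univ, smul_eq_mul]
            _ ≤ _ := Finset.sum_le_sum fun lam _ => hd'z lam
        nlinarith [hd'u]
      have hcount := counting u v
      have hfin : (Fintype.card F + 1) * d'
          ≤ Fintype.card F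
            * (Finset.univ.filter fun i : Fin N => u i ≠ 0 ∨ v i ≠ 0).card :=
        le_trans hsumge hcount
      have hqpos : 0 < Fintype.card F := Fintype.card_pos
      have hceil : Nat.ceil (((Fintype.card F + 1) * d' : ℚ) / (Fintype.card F : ℚ))
          ≤ (Finset.univ.filter fun i : Fin N => u i ≠ 0 ∨ v i ≠ 0).card := by
        rw [Nat.ceil_le, div_le_iff₀ (by exact_mod_cast hqpos : (0:ℚ) < Fintype.card F)]
        have hfinQ : (((Fintype.card F + 1) * d' : ℕ) : ℚ)
            ≤ ((Fintype.card F
              * (Finset.univ.filter fun i : Fin N => u i ≠ 0 ∨ v i ≠ 0).card : ℕ) : ℚ) := by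
          exact_mod_cast hfin
        push_cast at hfinQ ⊢
        linarith
      exact ⟨le_trans (min_le_right _ _) hd''le, le_trans (min_le_right _ _) hceil⟩
  -- membership of D × D in the symplectic dual
  have hsymp : ∀ y : (Fin N → F) × (Fin N → F), y.1 ∈ D → y.2 ∈ D → y ∈ sympDual S := by
    intro y hy1 hy2 z hzS
    rw [hS] at hzS
    obtain ⟨c, c', x, hz1, hz2⟩ := repS U V M hzS
    have hz1C' : z.1 ∈ C' := by rw [hz1]; exact hC'mem c x
    have hz2C' : z.2 ∈ C' := by rw [hz2]; exact hC'mem c' _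
    rw [hy2 z.1 hz1C', hy1 z.2 hz2C', sub_zero]
  constructor
  · intro u v huvS _ hboth
    exact (core u v huvS hboth).1
  · intro u v huvS hns
    refine (core u v huvS ?_).2
    intro ⟨h1, h2⟩
    exact hns (hsymp (u, v) h1 h2)
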